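/- Let K be a number field, I an ideal of O_K, and β ∈ O_K relatively prime to I (i.e. the ideal generated by β together with I is all of O_K). Then there exist a positive integer d, elements a, b ∈ O_K, a root ρ ∈ ℚ̄ of the polynomial X^d + a·X^{d-1} + b, and a unit δ of O_L, where L := K(ρ) is the finite extension of K generated by ρ, such that δ ≡ β (mod I·O_L). -/

import Mathlib

noncomputable section

open NumberField Polynomial

set_option synthInstance.maxHeartbeats 1000000 in
set_option maxHeartbeats 1000000 in
theorem stmt15 (K : Type) [Field K] [NumberField K]
    (I : Ideal (𝓞 K)) (β : 𝓞 K) (hcop : Ideal.span {β} ⊔ I = ⊤) :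
    ∃ (d : ℕ), 0 < d ∧ ∃ (a b : 𝓞 K) (L : Type) (_ : Field L) (_ : Algebra K L)
      (ρ : L),
      ρ ^ d + algebraMap K L (a : K) * ρ ^ (d - 1) + algebraMap K L (b : K) = 0 ∧
      IntermediateField.adjoin K {ρ} = ⊤ ∧ FiniteDimensional K L ∧
      ∃ δ : (𝓞 L)ˣ,
        (δ : 𝓞 L) - algebraMap (𝓞 K) (𝓞 L) β ∈ Ideal.map (algebraMap (𝓞 K) (𝓞 L)) I := by
  classical
  have h1 : (1 : 𝓞 K) ∈ Ideal.span {β} ⊔ I := by rw [hcop]; trivial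
  obtain ⟨p, hp, c, hc, hpc⟩ := Submodule.mem_sup.mp h1
  obtain ⟨x, hx⟩ := Ideal.mem_span_singleton'.mp hp
  have hxc : x * β + c = 1 := by rw [hx]; exact hpc
  by_cases hc0 : c = 0
  · -- β is a unit; trivial construction with L = K
    have hβu : IsUnit β := IsUnit.of_mul_eq_one x (by
      rw [hc0] at hxc; linear_combination hxc)
    refine ⟨1, one_pos, 0, 0, K, inferInstance, inferInstance, 0, by simp, ?_, inferInstance,
      hβu.unit, ?_⟩
    · rw [eq_top_iff]
      intro z _
      simpa using IntermediateField.algebraMap_mem (IntermediateField.adjoin K {(0 : K)}) z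
    · have h2 : (hβu.unit : 𝓞 K) = β := hβu.unit_spec
      have h3 : algebraMap (𝓞 K) (𝓞 K) β = β := rfl
      rw [h2]
      change β - β ∈ _
      rw [sub_self]
      exact Submodule.zero_mem _
  · -- main case
    haveI : Fintype (𝓞 K ⧸ Ideal.span {c}) :=
      @Fintype.ofFinite _ (Ideal.finiteQuotientOfFreeOfNeBot _ (by simpa [Ideal.span_singleton_eq_bot] using hc0))
    set Q := 𝓞 K ⧸ Ideal.span {c} with hQ
    have hβq : IsUnit (Ideal.Quotient.mk (Ideal.span {c}) β) := by
      refine IsUnit.of_mul_eq_one (Ideal.Quotient.mk _ x) ?_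
      rw [← map_mul, ← map_one (Ideal.Quotient.mk (Ideal.span {c}))]
      rw [Ideal.Quotient.mk_eq_mk_iff_sub_mem]
      refine Ideal.mem_span_singleton'.mpr ⟨-1, ?_⟩
      linear_combination -hxc
    set n := orderOf hβq.unit with hn
    have hnpos : 0 < n := orderOf_pos _
    set d := 2 * n with hd
    have hdpos : 0 < d := by omega
    have hβd : (Ideal.Quotient.mk (Ideal.span {c}) β) ^ d = 1 := by
      have h := pow_orderOf_eq_one hβq.unit
      have h2 : hβq.unit ^ d = 1 := by rw [hd, mul_comm, pow_mul, hn, h, one_pow]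
      calc (Ideal.Quotient.mk (Ideal.span {c}) β) ^ d = ((hβq.unit : Q)) ^ d := by
            rw [hβq.unit_spec]
        _ = ((hβq.unit ^ d : Qˣ) : Q) := by rw [Units.val_pow_eq_pow_val]
        _ = 1 := by rw [h2, Units.val_one]
    obtain ⟨m, hm⟩ : ∃ m, β ^ d - 1 = c * m := by
      have hmem : β ^ d - 1 ∈ Ideal.span {c} := by
        rw [← Ideal.Quotient.mk_eq_mk_iff_sub_mem]
        rw [map_pow, hβd, map_one]
      obtain ⟨m, hm⟩ := Ideal.mem_span_singleton'.mp hmem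
      exact ⟨m, by rw [← hm]; ring⟩
    have hco : IsCoprime β c := ⟨x, 1, by linear_combination hxc⟩
    obtain ⟨A₁, B₁, hAB⟩ := (hco.pow (m := d - 1) (n := d - 1))
    set aa := m * A₁ with haa
    set bb := -(m * B₁) with hbb
    have hcd : c ^ d = c ^ (d - 1) * c := by
      rw [← pow_succ]; congr 1; omega
    have key : β ^ d - (aa * c) * β ^ (d - 1) + bb * c ^ d = 1 := by
      rw [hcd, haa, hbb]
      linear_combination hm - (c * m) * hAB
    -- polynomial identity
    obtain ⟨e, he⟩ : ∃ e, d = e + 1 := ⟨d - 1, by omega⟩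
    have he1 : d - 1 = e := by omega
    set F : (𝓞 K)[X] := X ^ d + C aa * X ^ (d - 1) + C bb with hF
    set P : (𝓞 K)[X] := X ^ d + C (aa * c) * X ^ (d - 1) + C (bb * c ^ d) with hP
    have hcomp : P.comp (C c * X) = C (c ^ d) * F := by
      rw [hP, hF, he1, he]
      simp only [add_comp, mul_comp, pow_comp, X_comp, C_comp, map_mul, map_pow]
      ring
    have hPβ : P.eval (-β) = 1 := by
      have heven : Even d := ⟨n, by omega⟩
      have hodd : Odd (d - 1) := ⟨n - 1, by omega⟩
      rw [hP]
      simp only [eval_add, eval_mul, eval_pow, eval_X, eval_C]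
      rw [heven.neg_pow, hodd.neg_pow]
      linear_combination key
    have hdvd : (C c * X + C β) ∣ (C (c ^ d) * F - 1) := by
      have h0 := sub_dvd_eval_sub (C c * X) (C (-β)) (P.map (C : (𝓞 K) →+* (𝓞 K)[X]))
      simp only [eval_map] at h0
      have e1 : eval₂ C (C c * X) P = P.comp (C c * X) := rfl
      have e2 : eval₂ C (C (-β)) P = P.comp (C (-β)) := rfl
      rw [e1, e2, hcomp, comp_C, hPβ, map_neg, sub_neg_eq_add, map_one] at h0
      exact h0
    obtain ⟨w, hw⟩ := hdvd
    -- build the extension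
    have hFm : F.Monic := by
      rw [hF, he1, he]
      monicity!
    have hFdeg : F.natDegree = d := by
      rw [hF, he1, he]
      compute_degree!
    set fK : K[X] := F.map (algebraMap (𝓞 K) K) with hfK
    have hfKm : fK.Monic := hFm.map _
    have hfKdeg : fK.natDegree = d := by rw [hfK, hFm.natDegree_map, hFdeg]
    have hfK0 : fK ≠ 0 := hfKm.ne_zero
    have hfKnu : ¬ IsUnit fK := by
      intro h
      have := natDegree_eq_zero_of_isUnit h
      omega
    obtain ⟨q, hqirr, hqdvd⟩ := WfDvdMonoid.exists_irreducible_factor hfKnu hfK0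
    haveI : Fact (Irreducible q) := ⟨hqirr⟩
    set L := AdjoinRoot q with hL
    set ρ : L := AdjoinRoot.root q with hρ
    have hρ0 : Polynomial.aeval ρ fK = 0 := by
      obtain ⟨r, hr⟩ := hqdvd
      rw [hr, map_mul]
      have hq0 : Polynomial.aeval ρ q = 0 := by
        rw [Polynomial.aeval_def, AdjoinRoot.algebraMap_eq, hρ]
        exact AdjoinRoot.eval₂_root q
      rw [hq0, zero_mul]
    refine ⟨d, hdpos, aa, bb, L, inferInstance, inferInstance, ρ, ?_, ?_, ?_, ?_⟩
    · have h5 := hρ0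
      rw [hfK, hF] at h5
      simpa [Polynomial.map_add, Polynomial.map_mul, Polynomial.map_pow, map_C, map_X] using h5
    · rw [eq_top_iff]
      intro z _
      have h6 : Algebra.adjoin K ({ρ} : Set L) = ⊤ := AdjoinRoot.adjoinRoot_eq_top
      have h7 : z ∈ Algebra.adjoin K ({ρ} : Set L) := by rw [h6]; trivial
      exact IntermediateField.algebra_adjoin_le_adjoin K {ρ} h7
    · exact PowerBasis.finite (AdjoinRoot.powerBasis hqirr.ne_zero)
    · -- the unit δ
      haveI : IsScalarTower ℤ (𝓞 K) L :=
        IsScalarTower.of_algebraMap_eq' (Subsingleton.elim _ _)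
      have hρint : IsIntegral (𝓞 K) ρ := by
        refine ⟨F, hFm, ?_⟩
        have h8 : eval₂ (algebraMap (𝓞 K) L) ρ F
            = eval₂ (algebraMap K L) ρ (F.map (algebraMap (𝓞 K) K)) := by
          rw [eval₂_map, IsScalarTower.algebraMap_eq (𝓞 K) K L]
        rw [h8, ← aeval_def, ← hfK, hρ0]
      have hint : IsIntegral ℤ ρ := isIntegral_trans ρ hρint
      set ρ' : 𝓞 L := ⟨ρ, hint⟩ with hρ'
      set φ : (𝓞 K) →+* (𝓞 L) := algebraMap (𝓞 K) (𝓞 L) with hφ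
      have hevF : eval₂ φ ρ' F = 0 := by
        have h0 : (algebraMap (𝓞 L) L) (eval₂ φ ρ' F) = 0 := by
          rw [hom_eval₂ F φ (algebraMap (𝓞 L) L) ρ']
          have hcomm : (algebraMap (𝓞 L) L).comp φ
              = (algebraMap K L).comp (algebraMap (𝓞 K) K) := RingHom.ext fun z => rfl
          have hρcoe : (algebraMap (𝓞 L) L) ρ' = ρ := rfl
          rw [hcomm, hρcoe, ← eval₂_map, ← aeval_def, ← hfK, hρ0]
        refine NumberField.RingOfIntegers.ext ?_
        rw [NumberField.RingOfIntegers.coe_eq_algebraMap, h0]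
        simp
      have hmain : (φ c * ρ' + φ β) * (- eval₂ φ ρ' w) = 1 := by
        have h9 := congrArg (eval₂RingHom φ ρ') hw
        simp only [map_sub, map_mul, map_one, coe_eval₂RingHom, eval₂_C, eval₂_X, eval₂_add,
          eval₂_mul] at h9
        rw [hevF, mul_zero] at h9
        linear_combination h9
      refine ⟨Units.mkOfMulEqOne _ _ hmain, ?_⟩
      have hδ : ((Units.mkOfMulEqOne _ _ hmain : (𝓞 L)ˣ) : 𝓞 L) = φ c * ρ' + φ β := rfl
      rw [hδ]
      have h10 : φ c * ρ' + φ β - φ β = φ c * ρ' := by ring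
      rw [h10]
      exact Ideal.mul_mem_right ρ' _ (Ideal.mem_map_of_mem φ hc)
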